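/- Let D be a set with d elements listed as (e_1, ..., e_d), and let s be a nonzero integer with s ≤ d. Then the s-element subsets of D can be ordered as a sequence (S_i : 1 ≤ i ≤ C(d,s)) such that e_j ∈ S_i whenever i ≡ j (mod d). -/

import Mathlib

private lemma aux_partial (t : ℕ) (d : ℕ) : ∀ k : ℕ, k ≤ d →
    (∑ j ∈ Finset.range k, (d - 1 - j).choose t) + (d - k).choose (t+1) = d.choose (t+1) := by
  intro k
  induction k with
  | zero => simp
  | succ k ih =>
    intro hk
    have h1 := ih (by omega)
    have h2 : d - k = (d - 1 - k) + 1 := by omega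
    have h3 : d - (k+1) = d - 1 - k := by omega
    have h4 : (d - k).choose (t+1) = (d-1-k).choose t + (d-1-k).choose (t+1) := by
      rw [h2]; exact Nat.choose_succ_succ' _ _
    rw [Finset.sum_range_succ, h3]
    omega

private lemma aux_key (t d k q r0 : ℕ) (hk : 0 < k) (hkd : k ≤ d)
    (hdm : d * q + r0 = d.choose (t+1)) :
    k * q + min k r0 + (d - k).choose (t+1) ≤ d.choose (t+1) := by
  have hsum : ∑ j ∈ Finset.range d, (d - 1 - j).choose t = d.choose (t+1) := by
    have := aux_partial t d d le_rfl
    simpa using this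
  have hpart := aux_partial t d k hkd
  have hmain : k * q + min k r0 ≤ ∑ j ∈ Finset.range k, (d - 1 - j).choose t := by
    by_cases hb : q + 1 ≤ (d - 1 - (k-1)).choose t
    · have hkq : k * (q+1) ≤ ∑ j ∈ Finset.range k, (d-1-j).choose t := by
        have := Finset.card_nsmul_le_sum (Finset.range k) (fun j => (d-1-j).choose t) (q+1)
          (fun j hj => le_trans hb (Nat.choose_le_choose _ (by
            simp only [Finset.mem_range] at hj; omega)))
        simpa [Finset.card_range, smul_eq_mul] using this
      have hmin : min k r0 ≤ k := min_le_left _ _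
      have hmul : k * (q+1) = k*q + k := by ring
      omega
    · push_neg at hb
      have hb' : (d - 1 - (k-1)).choose t ≤ q := by omega
      have hico : ∑ j ∈ Finset.Ico k d, (d-1-j).choose t ≤ (d - k) * q := by
        have := Finset.sum_le_card_nsmul (Finset.Ico k d) (fun j => (d-1-j).choose t) q
          (fun j hj => by
            simp only [Finset.mem_Ico] at hj
            exact le_trans (Nat.choose_le_choose _ (by omega)) hb')
        simpa [Nat.card_Ico, smul_eq_mul] using this
      have hsplit : (∑ j ∈ Finset.range k, (d-1-j).choose t)
          + ∑ j ∈ Finset.Ico k d, (d-1-j).choose t = d.choose (t+1) := by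
        rw [Finset.range_eq_Ico, Finset.sum_Ico_consecutive _ (Nat.zero_le k) hkd,
          ← Finset.range_eq_Ico, hsum]
      have hmq : (d-k)*q + k*q = d*q := by
        rw [← Nat.add_mul]; congr 1; omega
      have hmin : min k r0 ≤ r0 := min_le_right _ _
      -- linear arithmetic over the atoms
      set X := k * q with hX
      set Y := (d-k) * q with hY
      set Z := d * q with hZ
      set m := min k r0 with hm
      omega
  omega

private lemma aux_fiber (C d q r0 r : ℕ) (hdm : d * q + r0 = C) (hr0 : r0 < d) :
    ((Finset.range C).filter (fun i => i % d = r)).card ≤ q + if r < r0 then 1 else 0 := by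
  classical
  have hd : 0 < d := by omega
  have h := Finset.card_le_card_of_injOn (fun i => i / d)
    (s := (Finset.range C).filter (fun i => i % d = r))
    (t := Finset.range (q + if r < r0 then 1 else 0)) ?_ ?_
  · simpa using h
  · intro i hi
    simp only [Finset.mem_coe, Finset.mem_filter, Finset.mem_range] at hi ⊢
    obtain ⟨hiC, hir⟩ := hi
    by_cases hr : r < r0
    · simp only [hr, if_true]
      rw [Nat.div_lt_iff_lt_mul hd]
      calc i < C := hiC
        _ = d * q + r0 := hdm.symm
        _ ≤ d * q + d := by omega
        _ = (q + 1) * d := by ring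
    · simp only [hr, if_false, Nat.add_zero]
      by_contra hge
      push_neg at hge
      have h1 : d * q ≤ d * (i / d) := Nat.mul_le_mul_left d hge
      have h2 : d * (i / d) + i % d = i := Nat.div_add_mod i d
      have hCi : C ≤ i := by
        calc C = d * q + r0 := hdm.symm
          _ ≤ d * q + r := by omega
          _ ≤ d * (i / d) + r := by omega
          _ = d * (i / d) + i % d := by rw [hir]
          _ = i := h2
      omega
  · intro a ha b hb hab
    simp only [Finset.mem_coe, Finset.mem_filter, Finset.mem_range] at ha hb
    have hab' : a / d = b / d := hab
    have h2 : d * (a / d) + a % d = a := Nat.div_add_mod a d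
    have h3 : d * (b / d) + b % d = b := Nat.div_add_mod b d
    calc a = d * (a / d) + a % d := h2.symm
      _ = d * (b / d) + b % d := by rw [hab', ha.2, hb.2]
      _ = b := h3

/-- Let `D` be a set with `d` elements listed as `e 0, …, e (d-1)` (an enumeration
`e : Fin d ≃ α`), and let `s` be a nonzero integer with `s ≤ d`.  Then the
`s`-element subsets of `D` can be ordered as a sequence
`S : Fin (d.choose s) → Finset α` (a bijective listing of all `s`-subsets)
such that `e j ∈ S i` whenever `i ≡ j (mod d)`. -/
theorem stmt_3 {α : Type*} [Fintype α] [DecidableEq α] (d s : ℕ)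
    (hcard : Fintype.card α = d) (e : Fin d ≃ α) (hs : 0 < s) (hsd : s ≤ d) :
    ∃ S : Fin (d.choose s) → Finset α,
      Function.Injective S ∧
      (∀ T : Finset α, T.card = s → ∃ i, S i = T) ∧
      (∀ i, (S i).card = s) ∧
      (∀ i : Fin (d.choose s), ∀ j : Fin d, (i : ℕ) % d = (j : ℕ) → e j ∈ S i) := by
  classical
  have hd : 0 < d := lt_of_lt_of_le hs hsd
  set C := d.choose s with hCdef
  let g : Fin C → Fin d := fun i => ⟨(i : ℕ) % d, Nat.mod_lt _ hd⟩
  let t : Fin C → Finset (Finset α) :=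
    fun i => Finset.univ.filter (fun T => T.card = s ∧ e (g i) ∈ T)
  set P : Finset (Finset α) := Finset.powersetCard s Finset.univ with hPdef
  have hPcard : P.card = C := by
    rw [hPdef, Finset.card_powersetCard, Finset.card_univ, hcard]
  have hall : ∀ A : Finset (Fin C), A.card ≤ (A.biUnion t).card := by
    intro A
    rcases A.eq_empty_or_nonempty with rfl | hA
    · simp
    set R : Finset (Fin d) := A.image g with hR
    set k := R.card with hk
    have hk0 : 0 < k := Finset.card_pos.mpr (hA.image g)
    have hkd : k ≤ d := by
      have := Finset.card_le_univ R
      simpa [Fintype.card_fin] using this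
    have hup : A.card ≤ k * (C / d) + min k (C % d) := by
      have h1 : A.card = ∑ r ∈ R, (A.filter fun i => g i = r).card :=
        Finset.card_eq_sum_card_fiberwise (fun i hi => Finset.mem_image_of_mem g hi)
      have h2 : ∀ r ∈ R, (A.filter fun i => g i = r).card
          ≤ C / d + if (r:ℕ) < C % d then 1 else 0 := by
        intro r _
        refine le_trans (Finset.card_le_card_of_injOn (fun i => (i:ℕ)) ?_ ?_)
          (aux_fiber C d (C/d) (C%d) (r:ℕ) (Nat.div_add_mod C d) (Nat.mod_lt _ hd))
        · intro i hi
          simp only [Finset.mem_coe, Finset.mem_filter, Finset.mem_range] at hi ⊢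
          refine ⟨i.isLt, ?_⟩
          have : g i = r := hi.2
          have := congrArg Fin.val this
          exact this
        · exact fun a _ b _ h => Fin.val_injective h
      have h3 : ∑ r ∈ R, (if (r:ℕ) < C % d then 1 else 0)
          ≤ min k (C % d) := by
        have he : ∑ r ∈ R, (if (r:ℕ) < C % d then 1 else 0)
            = (R.filter (fun r : Fin d => (r:ℕ) < C % d)).card := by
          rw [Finset.card_filter]
        rw [he]
        refine le_min ?_ ?_
        · exact le_trans (Finset.card_le_card (Finset.filter_subset _ _)) le_rfl
        · have := Finset.card_le_card_of_injOn (fun r : Fin d => (r:ℕ))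
            (s := R.filter (fun r : Fin d => (r:ℕ) < C % d)) (t := Finset.range (C % d))
            (fun r hr => by
              simp only [Finset.mem_coe, Finset.mem_filter] at hr
              simpa [Finset.mem_range] using hr.2)
            (fun a _ b _ h => Fin.val_injective h)
          simpa using this
      calc A.card = ∑ r ∈ R, (A.filter fun i => g i = r).card := h1
        _ ≤ ∑ r ∈ R, (C/d + if (r:ℕ) < C % d then 1 else 0) := Finset.sum_le_sum h2
        _ = k * (C/d) + ∑ r ∈ R, (if (r:ℕ) < C % d then 1 else 0) := by
            rw [Finset.sum_add_distrib, Finset.sum_const, smul_eq_mul, hk]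
        _ ≤ k * (C/d) + min k (C % d) := by exact Nat.add_le_add_left h3 _
    have hlow : C - (d - k).choose s ≤ (A.biUnion t).card := by
      have hsub : P.filter (fun T => ∃ r ∈ R, e r ∈ T) ⊆ A.biUnion t := by
        intro T hT
        simp only [Finset.mem_filter] at hT
        obtain ⟨hTP, r, hrR, hrT⟩ := hT
        obtain ⟨i, hiA, rfl⟩ := Finset.mem_image.mp hrR
        refine Finset.mem_biUnion.mpr ⟨i, hiA, ?_⟩
        simp only [t, Finset.mem_filter, Finset.mem_univ, true_and]
        exact ⟨(Finset.mem_powersetCard.mp hTP).2, hrT⟩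
      have hneg : P.filter (fun T => ¬ ∃ r ∈ R, e r ∈ T)
          = Finset.powersetCard s (Finset.univ \ R.image e) := by
        ext T
        constructor
        · intro hT
          rw [Finset.mem_filter] at hT
          obtain ⟨hTP, hno⟩ := hT
          push_neg at hno
          rw [Finset.mem_powersetCard] at hTP ⊢
          refine ⟨?_, hTP.2⟩
          intro a haT
          simp only [Finset.mem_sdiff, Finset.mem_univ, true_and, Finset.mem_image]
          rintro ⟨r, hrR, rfl⟩
          exact hno r hrR haT
        · intro hT
          rw [Finset.mem_powersetCard] at hT
          rw [Finset.mem_filter, Finset.mem_powersetCard]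
          refine ⟨⟨Finset.subset_univ _, hT.2⟩, ?_⟩
          rintro ⟨r, hrR, hrT⟩
          have hmem := hT.1 hrT
          simp only [Finset.mem_sdiff, Finset.mem_image] at hmem
          exact hmem.2 ⟨r, hrR, rfl⟩
      have hnegcard : (P.filter (fun T => ¬ ∃ r ∈ R, e r ∈ T)).card = (d - k).choose s := by
        rw [hneg, Finset.card_powersetCard, Finset.card_sdiff_of_subset (Finset.subset_univ _),
          Finset.card_univ, hcard, Finset.card_image_of_injective _ e.injective, hk]
      have hsplit := Finset.card_filter_add_card_filter_not
        (s := P) (p := fun T => ∃ r ∈ R, e r ∈ T)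
      have hposcard : (P.filter (fun T => ∃ r ∈ R, e r ∈ T)).card = C - (d-k).choose s := by
        omega
      calc C - (d - k).choose s = (P.filter (fun T => ∃ r ∈ R, e r ∈ T)).card := hposcard.symm
        _ ≤ (A.biUnion t).card := Finset.card_le_card hsub
    obtain ⟨u, hu⟩ : ∃ u, s = u + 1 := ⟨s - 1, by omega⟩
    have hkey := aux_key u d k (C / d) (C % d) hk0 hkd
      (by rw [← hu, ← hCdef]; exact Nat.div_add_mod C d)
    rw [← hu, ← hCdef] at hkey
    exact le_trans hup (le_trans (Nat.le_sub_of_add_le hkey) hlow)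
  obtain ⟨f, hfinj, hft⟩ := (Finset.all_card_le_biUnion_card_iff_exists_injective t).mp hall
  have hft' : ∀ i, (f i).card = s ∧ e (g i) ∈ f i := fun i => by
    have := hft i
    simpa only [t, Finset.mem_filter, Finset.mem_univ, true_and] using this
  have himg : Finset.univ.image f = P := by
    apply Finset.eq_of_subset_of_card_le
    · intro T hT
      obtain ⟨i, _, rfl⟩ := Finset.mem_image.mp hT
      exact Finset.mem_powersetCard.mpr ⟨Finset.subset_univ _, (hft' i).1⟩
    · rw [hPcard, Finset.card_image_of_injective _ hfinj, Finset.card_univ, Fintype.card_fin]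
  refine ⟨f, hfinj, ?_, fun i => (hft' i).1, ?_⟩
  · intro T hT
    have hTP : T ∈ P := Finset.mem_powersetCard.mpr ⟨Finset.subset_univ _, hT⟩
    rw [← himg] at hTP
    obtain ⟨i, _, hi⟩ := Finset.mem_image.mp hTP
    exact ⟨i, hi⟩
  · intro i j hij
    have hgj : g i = j := Fin.ext hij
    rw [← hgj]
    exact (hft' i).2
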